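/- For every polynomial g with real coefficients there exists a unique polynomial f with real coefficients such that g(t) − (1/(2π)) ∫_{−2}^{2} g(s) √(4 − s²) ds = (t² − 4) f'(t) + 3 t f(t) for all real t. -/

import Mathlib

open MeasureTheory Real Filter Finset Polynomial intervalIntegral

/-- The weight integral: ∫ √(4-s²) over [-2,2] equals 2π. -/
theorem weight_integral : ∫ s in (-2:ℝ)..2, Real.sqrt (4 - s ^ 2) = 2 * Real.pi := by
  have h : ∀ s : ℝ, Real.sqrt (4 - s ^ 2) = 2 * Real.sqrt (1 - (s/2) ^ 2) := by
    intro s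
    rw [show (4 : ℝ) - s ^ 2 = 4 * (1 - (s/2)^2) by ring, Real.sqrt_mul (by norm_num),
      show (4:ℝ) = 2^2 by norm_num, Real.sqrt_sq (by norm_num)]
  simp_rw [h]
  rw [intervalIntegral.integral_const_mul]
  have := inv_mul_integral_comp_div (f := fun x => Real.sqrt (1 - x ^ 2)) (c := 2) (a := -2) (b := 2)
  norm_num at this
  rw [show (2:ℝ) * ∫ (x : ℝ) in (-2:ℝ)..2, √(1 - (x / 2) ^ 2) = 4 * (1/2 * ∫ (x : ℝ) in (-2:ℝ)..2, √(1 - (x / 2) ^ 2)) by ring, this, integral_sqrt_one_sub_sq]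
  ring

/-- Integration by parts: the operator's image integrates to zero against the weight. -/
theorem op_integral_zero (f : Polynomial ℝ) :
    ∫ s in (-2:ℝ)..2, ((s ^ 2 - 4) * (derivative f).eval s + 3 * s * f.eval s) * Real.sqrt (4 - s ^ 2) = 0 := by
  set G : ℝ → ℝ := fun s => ((s ^ 2 - 4) * (derivative f).eval s + 3 * s * f.eval s) * Real.sqrt (4 - s ^ 2) with hG
  set F : ℝ → ℝ := fun s => - (f.eval s * (4 - s ^ 2) * Real.sqrt (4 - s ^ 2)) with hF
  have key : ∫ s in (-2:ℝ)..2, G s = F 2 - F (-2) := by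
    apply intervalIntegral.integral_eq_sub_of_hasDerivAt_of_le (by norm_num)
    · apply Continuous.continuousOn
      fun_prop
    · intro x hx
      simp only [Set.mem_Ioo] at hx
      have hpos : 0 < 4 - x ^ 2 := by nlinarith [hx.1, hx.2]
      have h1 : HasDerivAt (fun s : ℝ => 4 - s ^ 2) (-(2*x)) x := by
        simpa using ((hasDerivAt_pow 2 x).const_sub 4)
      have h2 : HasDerivAt (fun s : ℝ => Real.sqrt (4 - s ^ 2)) ((1 / (2 * Real.sqrt (4 - x ^ 2))) * (-(2*x))) x :=
        (Real.hasDerivAt_sqrt (ne_of_gt hpos)).comp x h1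
      have h3 : HasDerivAt (fun s : ℝ => f.eval s) ((derivative f).eval x) x := f.hasDerivAt x
      have h4 := ((h3.mul h1).mul h2)
      have h5 := h4.neg
      convert h5 using 1
      swap
      have hs : Real.sqrt (4 - x ^ 2) ≠ 0 := by positivity
      have hsq : Real.sqrt (4 - x ^ 2) * Real.sqrt (4 - x ^ 2) = 4 - x ^ 2 := Real.mul_self_sqrt hpos.le
      show ((x ^ 2 - 4) * eval x (derivative f) + 3 * x * eval x f) * √(4 - x ^ 2) = _
      simp only [Pi.mul_apply]
      field_simp
      linear_combination (x * f.eval x) * hsq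
      rfl
    · apply Continuous.intervalIntegrable
      fun_prop
  rw [key]
  norm_num [hF, show (4:ℝ) - 2^2 = 0 by norm_num]

/-- Injectivity of the operator. -/
theorem op_injective (d : Polynomial ℝ)
    (h : (X ^ 2 - C 4) * derivative d + C 3 * X * d = 0) : d = 0 := by
  by_contra hd
  set n := d.natDegree with hn
  have hlead : d.coeff n ≠ 0 := by
    simpa [hn] using mt Polynomial.leadingCoeff_eq_zero.mp hd
  have hco : ((X ^ 2 - C 4) * derivative d + C 3 * X * d).coeff (n + 1) = 0 := by
    rw [h]; simp
  have hXd : (C (3:ℝ) * X * d).coeff (n + 1) = 3 * d.coeff n := by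
    rw [mul_assoc, Polynomial.coeff_C_mul, Polynomial.coeff_X_mul]
  rcases Nat.eq_zero_or_pos n with h0 | hpos
  · have hder : derivative d = 0 := by
      have : d.natDegree = 0 := h0
      rw [Polynomial.eq_C_of_natDegree_eq_zero this]
      simp
    rw [hder] at hco
    simp only [mul_zero, zero_add] at hco
    rw [hXd, h0] at hco
    rw [h0] at hlead
    exact hlead (by linarith)
  · obtain ⟨m, hm⟩ : ∃ m, n = m + 1 := ⟨n - 1, by omega⟩
    have h1 : (X ^ 2 * derivative d).coeff (n + 1) = (n : ℝ) * d.coeff n := by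
      rw [hm, show m + 1 + 1 = m + 2 from rfl, Polynomial.coeff_X_pow_mul,
        Polynomial.coeff_derivative]
      push_cast
      ring
    have h2 : (C (4:ℝ) * derivative d).coeff (n + 1) = 0 := by
      rw [Polynomial.coeff_C_mul]
      have : (derivative d).natDegree < n + 1 := by
        have := Polynomial.natDegree_derivative_lt (show d.natDegree ≠ 0 by omega)
        omega
      rw [Polynomial.coeff_eq_zero_of_natDegree_lt this, mul_zero]
    rw [Polynomial.coeff_add, sub_mul, Polynomial.coeff_sub, h1, h2, hXd] at hco
    have : ((n : ℝ) + 3) * d.coeff n = 0 := by linarith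
    have hn3 : ((n : ℝ) + 3) ≠ 0 := by positivity
    exact hlead (by
      rcases mul_eq_zero.mp this with h' | h'
      · exact absurd h' hn3
      · exact h')

/-- Algebraic existence: every polynomial is in the image up to a constant. -/
theorem op_surjective_mod_const : ∀ n : ℕ, ∀ g : Polynomial ℝ, g.natDegree ≤ n →
    ∃ f : Polynomial ℝ, ∃ r : ℝ,
      g = (X ^ 2 - C 4) * derivative f + C 3 * X * f + C r := by
  intro n
  induction n with
  | zero =>
    intro g hg
    refine ⟨0, g.coeff 0, ?_⟩
    conv_lhs => rw [Polynomial.eq_C_of_natDegree_le_zero hg]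
    simp
  | succ n ih =>
    intro g hg
    set a : ℝ := g.coeff (n + 1) with ha
    set c : ℝ := a / ((n : ℝ) + 3) with hc
    have hn3 : ((n : ℝ) + 3) ≠ 0 := by positivity
    set P : Polynomial ℝ := (X ^ 2 - C 4) * derivative (X ^ n) + C 3 * X * X ^ n with hP
    have hPeq : P = (C (n : ℝ) + C 3) * X ^ (n + 1) - C 4 * C (n : ℝ) * X ^ (n - 1) := by
      rcases Nat.eq_zero_or_pos n with h0 | hpos
      · subst h0; simp [hP]
      · obtain ⟨k, hk⟩ : ∃ k, n = k + 1 := ⟨n - 1, by omega⟩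
        subst hk
        rw [hP, Polynomial.derivative_X_pow]
        have h1 : (k + 1 : ℕ) - 1 = k := rfl
        rw [h1, show (k:ℕ) + 1 + 1 = k + 2 from rfl]
        ring
    have hPco : ∀ m : ℕ, n < m → P.coeff m = if m = n + 1 then (n : ℝ) + 3 else 0 := by
      intro m hm
      have hne : ¬ (m = n - 1) := by omega
      rw [hPeq, Polynomial.coeff_sub, add_mul]
      simp only [Polynomial.coeff_add, mul_assoc, Polynomial.coeff_C_mul,
        Polynomial.coeff_X_pow]
      rcases eq_or_ne m (n + 1) with rfl | hne'
      · simp [hne]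
      · simp [hne, hne']
    set g₁ : Polynomial ℝ := g - C c * P with hg₁
    have hdeg : g₁.natDegree ≤ n := by
      rw [Polynomial.natDegree_le_iff_coeff_eq_zero]
      intro m hm
      rw [hg₁, Polynomial.coeff_sub, Polynomial.coeff_C_mul, hPco m hm]
      rcases eq_or_ne m (n + 1) with rfl | hne
      · simp only [if_pos rfl, hc, ← ha]
        field_simp
        simp
      · rw [if_neg hne]
        have : g.coeff m = 0 :=
          Polynomial.coeff_eq_zero_of_natDegree_lt (by omega)
        simp [this]
    obtain ⟨f₁, r, hf₁⟩ := ih g₁ hdeg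
    refine ⟨f₁ + C c * X ^ n, r, ?_⟩
    have hsplit : g = g₁ + C c * P := by rw [hg₁]; ring
    rw [hsplit, hf₁, hP, Polynomial.derivative_add, Polynomial.derivative_C_mul]
    ring

theorem exists_unique_S (g : Polynomial ℝ) :
    ∃! f : Polynomial ℝ, ∀ t : ℝ,
      g.eval t - (1 / (2 * Real.pi)) * ∫ s in (-2 : ℝ)..2, g.eval s * Real.sqrt (4 - s ^ 2) =
        (t ^ 2 - 4) * (Polynomial.derivative f).eval t + 3 * t * f.eval t := by
  obtain ⟨f, r, hfr⟩ := op_surjective_mod_const g.natDegree g le_rfl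
  have heval : ∀ s : ℝ, g.eval s =
      ((s ^ 2 - 4) * (derivative f).eval s + 3 * s * f.eval s) + r := by
    intro s
    rw [hfr]
    simp
  have hint : (∫ s in (-2:ℝ)..2, g.eval s * Real.sqrt (4 - s ^ 2)) = r * (2 * Real.pi) := by
    have : (fun s : ℝ => g.eval s * Real.sqrt (4 - s ^ 2)) =
        fun s : ℝ => ((s ^ 2 - 4) * (derivative f).eval s + 3 * s * f.eval s) * Real.sqrt (4 - s ^ 2)
          + r * Real.sqrt (4 - s ^ 2) := by
      funext s
      rw [heval s]
      ring
    rw [this, intervalIntegral.integral_add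
      (by apply Continuous.intervalIntegrable; fun_prop)
      (by apply Continuous.intervalIntegrable; fun_prop),
      op_integral_zero, intervalIntegral.integral_const_mul, weight_integral]
    ring
  have hc : (1 / (2 * Real.pi)) * ∫ s in (-2:ℝ)..2, g.eval s * Real.sqrt (4 - s ^ 2) = r := by
    rw [hint]
    field_simp
  refine ⟨f, ?_, ?_⟩
  · intro t
    rw [hc, heval t]
    ring
  · intro f₂ hf₂
    have hf₁ : ∀ t : ℝ,
        g.eval t - (1 / (2 * Real.pi)) * ∫ s in (-2 : ℝ)..2, g.eval s * Real.sqrt (4 - s ^ 2) =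
          (t ^ 2 - 4) * (derivative f).eval t + 3 * t * f.eval t := by
      intro t
      rw [hc, heval t]
      ring
    set d : Polynomial ℝ := f₂ - f with hd
    have hzero : (X ^ 2 - C 4) * derivative d + C 3 * X * d = 0 := by
      apply Polynomial.funext
      intro t
      have h1 := hf₂ t
      have h2 := hf₁ t
      simp only [hd, Polynomial.derivative_sub, Polynomial.eval_add, Polynomial.eval_mul,
        Polynomial.eval_sub, Polynomial.eval_pow, Polynomial.eval_C, Polynomial.eval_X,
        Polynomial.eval_zero]
      nlinarith [h1, h2]
    have : d = 0 := op_injective d hzero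
    have : f₂ = f := by
      have := sub_eq_zero.mp (by rw [← hd]; exact this)
      exact this
    exact this
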